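/- If p is an odd prime, then every finite p-group with exactly one subgroup of order p is cyclic. -/

import Mathlib

open Subgroup Finset

private lemma sq_dvd_aux (c : ℤ) (i : ℕ) : c ^ 2 ∣ (1 + c) ^ i - 1 - i * c := by
  induction i with
  | zero => simp
  | succ i ih =>
    have h : (1 + c) ^ (i + 1) - 1 - (↑(i + 1) : ℤ) * c
        = (1 + c) * ((1 + c) ^ i - 1 - i * c) + i * c ^ 2 := by
      push_cast; ring
    rw [h]
    exact dvd_add (ih.mul_left _) ⟨(i : ℤ), by ring⟩

private lemma cube_dvd_aux (c : ℤ) (m : ℕ) :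
    c ^ 3 ∣ (1 + c) ^ m - 1 - m * c - (m.choose 2 : ℤ) * c ^ 2 := by
  induction m with
  | zero => simp
  | succ m ih =>
    have hch : ((m + 1).choose 2 : ℤ) = (m.choose 2 : ℤ) + m := by
      rw [Nat.choose_succ_succ]
      push_cast [Nat.choose_one_right]
      ring
    have h : (1 + c) ^ (m + 1) - 1 - (↑(m + 1) : ℤ) * c - ((m + 1).choose 2 : ℤ) * c ^ 2
        = (1 + c) * ((1 + c) ^ m - 1 - m * c - (m.choose 2 : ℤ) * c ^ 2)
          + (m.choose 2 : ℤ) * c ^ 3 := by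
      rw [hch]; push_cast; ring
    rw [h]
    exact dvd_add (ih.mul_left _) ⟨(m.choose 2 : ℤ), by ring⟩

private lemma fermat_int {p : ℕ} (hp : p.Prime) (s : ℤ) : (p : ℤ) ∣ s ^ p - s := by
  haveI : Fact p.Prime := ⟨hp⟩
  have h : ((s ^ p - s : ℤ) : ZMod p) = 0 := by
    push_cast
    rw [ZMod.pow_card]
    ring
  exact (ZMod.intCast_zmod_eq_zero_iff_dvd _ p).mp h

private lemma key_dvd {p : ℕ} (hp : p.Prime) (hp2 : 2 < p) (s : ℤ) :
    ∀ e : ℕ, (p : ℤ) ^ e ∣ s ^ p - 1 → (p : ℤ) ^ (e - 1) ∣ s - 1 := by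
  have hfermat : ∀ f : ℕ, 1 ≤ f → (p : ℤ) ^ f ∣ s ^ p - 1 → (p : ℤ) ∣ s - 1 := by
    intro f hf h
    have h1 : (p : ℤ) ∣ s ^ p - 1 := dvd_trans (dvd_pow_self _ (by omega)) h
    have h2 := fermat_int hp s
    have : s - 1 = (s ^ p - 1) - (s ^ p - s) := by ring
    rw [this]; exact dvd_sub h1 h2
  intro e
  induction e with
  | zero => simp
  | succ e ih =>
    intro h
    rcases Nat.lt_or_ge e 2 with he | he
    · interval_cases e
      · simpa using (one_dvd _)
      · simpa using hfermat 2 (by omega) h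
    · -- e ≥ 2
      have hc : (p : ℤ) ^ (e - 1) ∣ s - 1 :=
        ih (dvd_trans (pow_dvd_pow _ (by omega)) h)
      set c : ℤ := s - 1 with hcdef
      have hs : s = 1 + c := by ring
      obtain ⟨K, hK⟩ := cube_dvd_aux c p
      have hkey : s ^ p - 1 = p * c + (p.choose 2 : ℤ) * c ^ 2 + c ^ 3 * K := by
        rw [hs]; linarith [hK]
      have hpC : (p : ℤ) ∣ (p.choose 2 : ℤ) :=
        Int.natCast_dvd_natCast.mpr (hp.dvd_choose_self (by omega) hp2)
      have hd2 : (p : ℤ) ^ (e + 1) ∣ (p.choose 2 : ℤ) * c ^ 2 := by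
        obtain ⟨C', hC'⟩ := hpC
        obtain ⟨t, ht⟩ := pow_dvd_pow_of_dvd hc 2
        have : (p.choose 2 : ℤ) * c ^ 2 = (p : ℤ) ^ (2 * (e - 1) + 1) * (C' * t) := by
          rw [hC', ht, ← pow_mul, pow_succ]
          ring
        rw [this]
        exact Dvd.dvd.mul_right (pow_dvd_pow _ (by omega)) _
      have hd3 : (p : ℤ) ^ (e + 1) ∣ c ^ 3 * K := by
        obtain ⟨t, ht⟩ := pow_dvd_pow_of_dvd hc 3
        rw [ht, ← pow_mul]
        exact ((pow_dvd_pow ((p : ℤ)) (by omega)).mul_right _).mul_right _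
      have hpc : (p : ℤ) ^ (e + 1) ∣ (p : ℤ) * c := by
        have : (p : ℤ) * c = (s ^ p - 1) - (p.choose 2 : ℤ) * c ^ 2 - c ^ 3 * K := by
          rw [hkey]; ring
        rw [this]
        exact dvd_sub (dvd_sub h hd2) hd3
      have hp0 : (p : ℤ) ≠ 0 := by positivity
      have : (p : ℤ) * (p : ℤ) ^ e ∣ (p : ℤ) * c := by
        rwa [← pow_succ'] 
      simpa using (mul_dvd_mul_iff_left hp0).mp this

private lemma geom_dvd {p : ℕ} (hp : p.Prime) (hp2 : 2 < p) (s : ℤ) (e : ℕ) (he : 1 ≤ e)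
    (h : (p : ℤ) ^ e ∣ s ^ p - 1) :
    (p : ℤ) ^ e ∣ (∑ i ∈ Finset.range p, s ^ i) - p := by
  set c : ℤ := s - 1 with hcdef
  have hs : s = 1 + c := by ring
  have hpc : (p : ℤ) ∣ c := by
    have h1 : (p : ℤ) ∣ s ^ p - 1 := dvd_trans (dvd_pow_self _ (by omega)) h
    have h2 := fermat_int hp s
    have h3 : c = (s ^ p - 1) - (s ^ p - s) := by rw [hcdef]; ring
    rw [h3]; exact dvd_sub h1 h2
  have hc : (p : ℤ) ^ (e - 1) ∣ c := key_dvd hp hp2 s e h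
  -- sum decomposition
  have hsum2 : c ^ 2 ∣ ∑ i ∈ Finset.range p, ((1 + c) ^ i - 1 - i * c) :=
    Finset.dvd_sum fun i _ => sq_dvd_aux c i
  obtain ⟨K, hK⟩ := hsum2
  have hsplit : (∑ i ∈ Finset.range p, s ^ i) - p
      = c ^ 2 * K + (∑ i ∈ Finset.range p, (i : ℤ)) * c := by
    have : ∑ i ∈ Finset.range p, ((1 + c) ^ i - 1 - i * c)
        = (∑ i ∈ Finset.range p, s ^ i) - p - (∑ i ∈ Finset.range p, (i : ℤ)) * c := by
      rw [Finset.sum_sub_distrib, Finset.sum_sub_distrib, hs, Finset.sum_const,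
        Finset.card_range, Finset.sum_mul]
      push_cast
      ring
    rw [this] at hK
    linarith [hK]
  -- p divides the Gauss sum
  have hT : (p : ℤ) ∣ ∑ i ∈ Finset.range p, (i : ℤ) := by
    have h2 : (∑ i ∈ Finset.range p, i) * 2 = p * (p - 1) := Finset.sum_range_id_mul_two p
    have hdvd : p ∣ (∑ i ∈ Finset.range p, i) * 2 := ⟨p - 1, h2⟩
    rcases (Nat.Prime.dvd_mul hp).mp hdvd with h | h
    · have hcast := Int.natCast_dvd_natCast.mpr h
      push_cast at hcast
      exact hcast
    · exact absurd (Nat.le_of_dvd (by norm_num) h) (by omega)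
  rw [hsplit]
  refine dvd_add ?_ ?_
  · -- p^e ∣ c^2 * K
    obtain ⟨t, ht⟩ := hc
    obtain ⟨u, hu⟩ := hpc
    have : c ^ 2 = ((p : ℤ) ^ (e - 1) * (p : ℤ)) * (t * u) := by
      rw [pow_two]
      nth_rewrite 1 [ht]
      nth_rewrite 1 [hu]
      ring
    rw [this, ← pow_succ]
    have he' : e - 1 + 1 = e := by omega
    rw [he']
    exact Dvd.dvd.mul_right (Dvd.dvd.mul_right dvd_rfl _) _
  · -- p^e ∣ T * c
    obtain ⟨t, ht⟩ := hT
    obtain ⟨u, hu⟩ := hc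
    have : (∑ i ∈ Finset.range p, (i : ℤ)) * c = ((p : ℤ) ^ (e - 1) * (p : ℤ)) * (t * u) := by
      rw [ht, hu]; ring
    rw [this, ← pow_succ]
    have he' : e - 1 + 1 = e := by omega
    rw [he']
    exact Dvd.dvd.mul_right dvd_rfl _

universe u

private lemma aux_cyclic {p : ℕ} (hp : p.Prime) (hp2 : 2 < p) :
    ∀ n : ℕ, ∀ (G : Type u) (_ : Group G) (_ : Finite G) (k : ℕ),
      Nat.card G = n → Nat.card G = p ^ k →
      (∃! H : Subgroup G, Nat.card H = p) → IsCyclic G := by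
  haveI fact_p : Fact p.Prime := ⟨hp⟩
  intro n
  induction n using Nat.strong_induction_on with
  | _ n ih =>
  intro G _ _ k hn hcard huniq
  subst hn
  rcases k with _ | _ | k
  · -- trivial group
    haveI := (Nat.card_eq_one_iff_unique.mp (by simpa using hcard)).1
    exact isCyclic_of_subsingleton
  · exact isCyclic_of_prime_card (by simpa using hcard)
  · -- |G| = p ^ (k + 2)
    -- find a subgroup of index p
    have hdvd : p ^ (k + 1) ∣ Nat.card G := by
      rw [hcard]; exact pow_dvd_pow p (by omega)
    obtain ⟨M, hM⟩ := Sylow.exists_subgroup_card_pow_prime p hdvd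
    have hMne : M ≠ ⊤ := by
      intro h
      rw [h, Subgroup.card_top, hcard] at hM
      have := Nat.pow_right_injective hp.two_le hM
      omega
    -- M is cyclic by induction
    have hMlt : p ^ (k + 1) < Nat.card G := by
      rw [hcard]
      exact Nat.pow_lt_pow_succ hp.one_lt
    have hMuniq : ∃! L : Subgroup M, Nat.card L = p := by
      have hpdvdM : p ∣ Nat.card M := by
        rw [hM]; exact dvd_pow_self p (by omega)
      obtain ⟨m, hm⟩ := exists_prime_orderOf_dvd_card' p hpdvdM
      have hinj := M.subtype_injective
      have hmapcard : ∀ L : Subgroup M, Nat.card (L.map M.subtype) = Nat.card L := fun L =>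
        (Nat.card_congr (Subgroup.equivMapOfInjective L M.subtype hinj).toEquiv).symm
      refine ⟨Subgroup.zpowers m, by show Nat.card (Subgroup.zpowers m) = p; rw [Nat.card_zpowers, hm], ?_⟩
      intro L hL
      have h1 : Nat.card (L.map M.subtype) = p := by rw [hmapcard]; exact hL
      have h2 : Nat.card ((Subgroup.zpowers m).map M.subtype) = p := by
        rw [hmapcard, Nat.card_zpowers, hm]
      obtain ⟨H0, _, hH0u⟩ := huniq
      have := (hH0u _ h1).trans (hH0u _ h2).symm
      exact Subgroup.map_injective hinj this
    have hMcyc : IsCyclic M := ih (p ^ (k + 1)) (by rwa [← hM] at hMlt ⊢ <;> rw [hM]) M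
      inferInstance inferInstance (k + 1) hM hM hMuniq
    -- generator a of M
    obtain ⟨g, hg⟩ := hMcyc.exists_generator
    set a : G := (g : G) with ha
    have hMz : Subgroup.zpowers a = M := by
      apply le_antisymm
      · exact Subgroup.zpowers_le.mpr g.2
      · intro z hz
        obtain ⟨i, hi⟩ := hg ⟨z, hz⟩
        exact ⟨i, by have h := congrArg Subtype.val hi; simpa using h⟩
    have horder : orderOf a = p ^ (k + 1) := by
      rw [← Nat.card_zpowers, hMz, hM]
    -- M is normal
    have hpG : IsPGroup p G := IsPGroup.of_card hcard
    haveI hMnorm : M.Normal := by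
      rw [← Subgroup.normalizer_eq_top_iff]
      haveI := hpG.isNilpotent
      have hnc : NormalizerCondition G := normalizerCondition_of_isNilpotent
      have hlt : M < Subgroup.normalizer (M : Set G) := hnc M (lt_top_iff_ne_top.mpr hMne)
      have hd : Nat.card (Subgroup.normalizer (M : Set G)) ∣ p ^ (k + 2) := by
        rw [← hcard]; exact Subgroup.card_subgroup_dvd_card _
      obtain ⟨j, hj, hje⟩ := (Nat.dvd_prime_pow hp).mp hd
      have hdd : p ^ (k + 1) ∣ p ^ j := by
        rw [← hM, ← hje]; exact Subgroup.card_dvd_of_le hlt.le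
      have hj1 : k + 1 ≤ j := (Nat.pow_dvd_pow_iff_le_right hp.one_lt).mp hdd
      have hjne : j ≠ k + 1 := by
        intro hjeq
        have : M = Subgroup.normalizer (M : Set G) := Subgroup.eq_of_le_of_card_ge hlt.le (by
          rw [hje, hjeq, hM])
        exact absurd this hlt.ne
      have : j = k + 2 := by omega
      exact Subgroup.eq_top_of_card_eq _ (by rw [hje, this, hcard])
    -- element outside M
    obtain ⟨x, hx⟩ : ∃ x : G, x ∉ M := by
      by_contra h
      push_neg at h
      exact hMne ((Subgroup.eq_top_iff' M).mpr h)
    have hidx : M.index = p := by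
      have hmi := Subgroup.card_mul_index M
      rw [hM, hcard] at hmi
      have : p ^ (k + 1) * M.index = p ^ (k + 1) * p := by
        rw [hmi, pow_succ]
      exact Nat.eq_of_mul_eq_mul_left (by positivity) this
    have hxp : x ^ p ∈ M := by
      rw [← hidx]; exact Subgroup.pow_index_mem M x
    -- the conjugation exponent s
    obtain ⟨s, hs⟩ : ∃ s : ℤ, a ^ s = x⁻¹ * a * x := by
      have : x⁻¹ * a * x ∈ M := by
        have := hMnorm.conj_mem a (hMz ▸ Subgroup.mem_zpowers a) x⁻¹
        rwa [inv_inv] at this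
      rwa [← hMz] at this
    have hconj : ∀ t : ℤ, x⁻¹ * a ^ t * x = a ^ (s * t) := by
      intro t
      have h := conj_zpow (i := t) (a := x⁻¹) (b := a)
      rw [inv_inv] at h
      rw [← h, ← hs, ← zpow_mul]
    have hmove : ∀ t : ℤ, a ^ t * x = x * a ^ (s * t) := by
      intro t
      have h := hconj t
      calc a ^ t * x = x * (x⁻¹ * a ^ t * x) := by group
        _ = x * a ^ (s * t) := by rw [h]
    -- power formula
    have hpow : ∀ (j : ℤ) (i : ℕ),
        (x * a ^ j) ^ i = x ^ i * a ^ (j * ∑ t ∈ Finset.range i, s ^ t) := by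
      intro j i
      induction i with
      | zero => simp
      | succ i ihh =>
        rw [pow_succ, ihh]
        calc x ^ i * a ^ (j * ∑ t ∈ Finset.range i, s ^ t) * (x * a ^ j)
            = x ^ i * (a ^ (j * ∑ t ∈ Finset.range i, s ^ t) * x) * a ^ j := by group
          _ = x ^ i * (x * a ^ (s * (j * ∑ t ∈ Finset.range i, s ^ t))) * a ^ j := by
              rw [hmove]
          _ = x ^ (i + 1) * a ^ (j * ∑ t ∈ Finset.range (i + 1), s ^ t) := by
              have hexp : j * ∑ t ∈ Finset.range (i + 1), s ^ t
                  = s * (j * ∑ t ∈ Finset.range i, s ^ t) + j := by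
                rw [geom_sum_succ]; ring
              rw [hexp, zpow_add]
              group
    -- s^p ≡ 1 mod p^(k+1)
    obtain ⟨r, hr⟩ : ∃ r : ℤ, a ^ r = x ^ p := by rwa [← hMz] at hxp
    have hconj_iter : ∀ i : ℕ, (x ^ i)⁻¹ * a * x ^ i = a ^ (s ^ i : ℤ) := by
      intro i
      induction i with
      | zero => simp
      | succ i ihh =>
        have h1 : (x ^ (i + 1))⁻¹ * a * x ^ (i + 1)
            = (x ^ i)⁻¹ * (x⁻¹ * a * x) * x ^ i := by group
        rw [h1, ← hs]
        have h2 : (x ^ i)⁻¹ * a ^ s * x ^ i = ((x ^ i)⁻¹ * a * x ^ i) ^ s := by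
          have := conj_zpow (i := s) (a := (x ^ i)⁻¹) (b := a)
          rw [inv_inv] at this
          rw [this]
        rw [h2, ihh, ← zpow_mul, ← pow_succ]
    have hsp : a ^ ((s : ℤ) ^ p - 1) = 1 := by
      have h1 := hconj_iter p
      rw [← hr] at h1
      have h2 : (a ^ r)⁻¹ * a * a ^ r = a := by group
      rw [h2] at h1
      rw [zpow_sub, ← h1, zpow_one, mul_inv_cancel]
    have hdvd1 : (p : ℤ) ^ (k + 1) ∣ s ^ p - 1 := by
      have := orderOf_dvd_iff_zpow_eq_one.mpr hsp
      rw [horder] at this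
      exact_mod_cast this
    have hgeom : (p : ℤ) ^ (k + 1) ∣ (∑ i ∈ Finset.range p, s ^ i) - p :=
      geom_dvd hp hp2 s (k + 1) (by omega) hdvd1
    have hsum_collapse : ∀ j : ℤ, a ^ (j * ∑ t ∈ Finset.range p, s ^ t) = a ^ (j * p) := by
      intro j
      have h1 : a ^ (j * ((∑ t ∈ Finset.range p, s ^ t) - p)) = 1 := by
        apply orderOf_dvd_iff_zpow_eq_one.mp
        rw [horder]
        exact Dvd.dvd.mul_left (by exact_mod_cast hgeom) j
      calc a ^ (j * ∑ t ∈ Finset.range p, s ^ t)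
          = a ^ (j * p) * a ^ (j * ((∑ t ∈ Finset.range p, s ^ t) - p)) := by
            rw [← zpow_add]; congr 1; ring
        _ = a ^ (j * p) := by rw [h1, mul_one]
    have hpowp : ∀ j : ℤ, (x * a ^ j) ^ p = a ^ (r + j * p) := by
      intro j
      rw [hpow j p, hsum_collapse j, ← hr, ← zpow_add]
    by_cases hpr : (p : ℤ) ∣ r
    · -- contradiction case: produce an element of order p outside M
      exfalso
      obtain ⟨u, hu⟩ := hpr
      set y : G := x * a ^ (-u : ℤ) with hy
      have hyp : y ^ p = 1 := by
        rw [hy, hpowp (-u), hu]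
        have : (p : ℤ) * u + -u * p = 0 := by ring
        rw [this, zpow_zero]
      have hyM : y ∉ M := by
        intro hmem
        have : x = y * a ^ (u : ℤ) := by rw [hy]; group
        rw [this] at hx
        exact hx (M.mul_mem hmem (hMz ▸ Subgroup.zpow_mem (Subgroup.zpowers a)
          (Subgroup.mem_zpowers a) u))
      have hy1 : y ≠ 1 := fun h => hyM (h ▸ M.one_mem)
      have hyord : orderOf y = p := orderOf_eq_prime hyp hy1
      -- element of order p inside M
      set m : G := a ^ (p ^ k) with hm
      have hmord : orderOf m = p := by
        rw [hm, orderOf_pow, horder]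
        have hgcd : Nat.gcd (p ^ (k + 1)) (p ^ k) = p ^ k :=
          Nat.gcd_eq_right (pow_dvd_pow p (by omega))
        rw [hgcd, pow_succ, Nat.mul_div_cancel_left _ (by positivity)]
      obtain ⟨H0, _, hH0u⟩ := huniq
      have hyH := hH0u (Subgroup.zpowers y)
        (by show Nat.card (Subgroup.zpowers y) = p; rw [Nat.card_zpowers, hyord])
      have hmH := hH0u (Subgroup.zpowers m)
        (by show Nat.card (Subgroup.zpowers m) = p; rw [Nat.card_zpowers, hmord])
      have hzy : Subgroup.zpowers y = Subgroup.zpowers m := hyH.trans hmH.symm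
      have hmM : Subgroup.zpowers m ≤ M := by
        rw [← hMz]
        exact Subgroup.zpowers_le.mpr ⟨((p ^ k : ℕ) : ℤ), by
          show a ^ ((p ^ k : ℕ) : ℤ) = m
          rw [zpow_natCast, hm]⟩
      exact hyM (hmM (hzy ▸ Subgroup.mem_zpowers y))
    · -- G is cyclic generated by x
      have hprime : Prime (p : ℤ) := Int.prime_iff_natAbs_prime.mpr (by simpa using hp)
      have hcop : IsCoprime ((p : ℤ) ^ (k + 1)) r :=
        IsCoprime.pow_left ((Prime.coprime_iff_not_dvd hprime).mpr hpr)
      obtain ⟨v, w, hvw⟩ := hcop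
      have haX : a ∈ Subgroup.zpowers x := by
        have h1 : a = (a ^ ((p : ℤ) ^ (k + 1))) ^ v * (a ^ r) ^ w := by
          rw [← zpow_mul, ← zpow_mul, ← zpow_add]
          have : (p : ℤ) ^ (k + 1) * v + r * w = 1 := by linarith [hvw]
          rw [this, zpow_one]
        have h2 : a ^ ((p : ℤ) ^ (k + 1)) = 1 := by
          apply orderOf_dvd_iff_zpow_eq_one.mp
          rw [horder]
          exact_mod_cast dvd_rfl
        rw [h1, h2, one_zpow, one_mul, hr, ← zpow_natCast, ← zpow_mul]
        exact ⟨(p : ℤ) * w, rfl⟩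
      have hMle : M ≤ Subgroup.zpowers x := by
        rw [← hMz]
        exact Subgroup.zpowers_le.mpr haX
      have hd : Nat.card (Subgroup.zpowers x) ∣ p ^ (k + 2) := by
        rw [← hcard]; exact Subgroup.card_subgroup_dvd_card _
      obtain ⟨j, hj, hje⟩ := (Nat.dvd_prime_pow hp).mp hd
      have hdd : p ^ (k + 1) ∣ p ^ j := by
        rw [← hM, ← hje]; exact Subgroup.card_dvd_of_le hMle
      have hj1 : k + 1 ≤ j := (Nat.pow_dvd_pow_iff_le_right hp.one_lt).mp hdd
      have hjne : j ≠ k + 1 := by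
        intro hjeq
        have : M = Subgroup.zpowers x := Subgroup.eq_of_le_of_card_ge hMle (by
          rw [hje, hjeq, hM])
        exact hx (this ▸ Subgroup.mem_zpowers x)
      have hjeq : j = k + 2 := by omega
      have htop : Subgroup.zpowers x = ⊤ :=
        Subgroup.eq_top_of_card_eq _ (by rw [hje, hjeq, hcard])
      exact ⟨⟨x, fun z => by
        have hz : z ∈ (⊤ : Subgroup G) := Subgroup.mem_top z
        rw [← htop] at hz
        exact hz⟩⟩

theorem stmt_4 {G : Type*} [Group G] [Fintype G] {p k : ℕ} (hp : p.Prime)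
    (hodd : Odd p) (hcard : Fintype.card G = p ^ k)
    (huniq : ∃! H : Subgroup G, Nat.card H = p) :
    IsCyclic G := by
  have hp2 : 2 < p := by
    rcases Nat.lt_or_ge 2 p with h | h
    · exact h
    · interval_cases p
      · exact absurd hp (by decide)
      · exact absurd hp (by decide)
      · exact absurd hodd (by decide)
  exact aux_cyclic hp hp2 (Nat.card G) G inferInstance inferInstance k rfl
    (by rw [Nat.card_eq_fintype_card, hcard]) huniq
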